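/- Positive invariance in the integer-order case: let α = 1 and let T, I, V, C : [0,∞) → ℝ be differentiable functions satisfying T' = λ − β·V·T − μ·T, I' = β·V·T − k·I·C − δ·I, V' = N·δ·I − c·V, C' = q·I·C − σ·C on [0,∞), with T(0) ≥ 0, I(0) ≥ 0, V(0) ≥ 0, C(0) ≥ 0. Then T(t) ≥ 0, I(t) ≥ 0, V(t) ≥ 0 and C(t) ≥ 0 for all t ≥ 0. -/
import Mathlib

open Set Filter Real Topology

/-- If `g` has derivative `d` at `t0` and `g t0` is a minimum over `(a, t0)`,
then `d ≤ 0`. -/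
private lemma left_min_deriv_nonpos {g : ℝ → ℝ} {t0 d a : ℝ} (ha : a < t0)
    (h : HasDerivAt g d t0) (hmin : ∀ u, a < u → u < t0 → g t0 ≤ g u) : d ≤ 0 := by
  have h' : HasDerivWithinAt g d (Iio t0) t0 := h.hasDerivWithinAt
  rw [hasDerivWithinAt_iff_tendsto_slope] at h'
  have hself : (Iio t0) \ {t0} = Iio t0 := by
    apply diff_singleton_eq_self; simp
  rw [hself] at h'
  refine le_of_tendsto h' ?_
  have hmem : Ioo a t0 ∈ 𝓝[<] t0 := Ioo_mem_nhdsLT_of_mem ⟨ha, le_refl _⟩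
  filter_upwards [hmem] with u hu
  have h1 : g t0 ≤ g u := hmin u hu.1 hu.2
  have h2 : u - t0 < 0 := by linarith [hu.2]
  rw [slope_def_field]
  have : g u - g t0 ≥ 0 := by linarith
  exact div_nonpos_of_nonneg_of_nonpos this (le_of_lt h2)

/-- Lower bound for a bilinear form on a box. -/
private lemma box_prod_lower {x y E S : ℝ} (hE : 0 ≤ E) (hS : 0 ≤ S)
    (hx1 : -E ≤ x) (hx2 : x ≤ S) (hy1 : -E ≤ y) (hy2 : y ≤ S) :
    -(S * E) ≤ x * y := by
  rcases le_or_gt 0 x with hx | hx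
  · have h1 : x * (-E) ≤ x * y := mul_le_mul_of_nonneg_left hy1 hx
    have h2 : x * E ≤ S * E := mul_le_mul_of_nonneg_right hx2 hE
    nlinarith
  · have h1 : x * S ≤ x * y := mul_le_mul_of_nonpos_left hy2 (le_of_lt hx)
    have h2 : -E * S ≤ x * S := mul_le_mul_of_nonneg_right hx1 hS
    nlinarith

set_option maxHeartbeats 1000000 in
theorem positive_invariance_integer_order
    (lam β μ k δ N c q σ : ℝ)
    (hlam : 0 < lam) (hβ : 0 < β) (hμ : 0 < μ) (hk : 0 < k) (hδ : 0 < δ)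
    (hN : 0 < N) (hc : 0 < c) (hq : 0 < q) (hσ : 0 < σ)
    (T I V C : ℝ → ℝ)
    (hT : ∀ t ∈ Set.Ici (0 : ℝ),
      HasDerivWithinAt T (lam - β * V t * T t - μ * T t) (Set.Ici 0) t)
    (hI : ∀ t ∈ Set.Ici (0 : ℝ),
      HasDerivWithinAt I (β * V t * T t - k * I t * C t - δ * I t) (Set.Ici 0) t)
    (hV : ∀ t ∈ Set.Ici (0 : ℝ),
      HasDerivWithinAt V (N * δ * I t - c * V t) (Set.Ici 0) t)
    (hC : ∀ t ∈ Set.Ici (0 : ℝ),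
      HasDerivWithinAt C (q * I t * C t - σ * C t) (Set.Ici 0) t)
    (hT0 : 0 ≤ T 0) (hI0 : 0 ≤ I 0) (hV0 : 0 ≤ V 0) (hC0 : 0 ≤ C 0) :
    ∀ t ≥ (0 : ℝ), 0 ≤ T t ∧ 0 ≤ I t ∧ 0 ≤ V t ∧ 0 ≤ C t := by
  intro t ht
  -- continuity on [0, ∞)
  have hTc : ContinuousOn T (Ici (0:ℝ)) := fun u hu => (hT u hu).continuousWithinAt
  have hIc : ContinuousOn I (Ici (0:ℝ)) := fun u hu => (hI u hu).continuousWithinAt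
  have hVc : ContinuousOn V (Ici (0:ℝ)) := fun u hu => (hV u hu).continuousWithinAt
  have hCc : ContinuousOn C (Ici (0:ℝ)) := fun u hu => (hC u hu).continuousWithinAt
  have hsub : Icc (0:ℝ) t ⊆ Ici (0:ℝ) := fun u hu => hu.1
  -- a uniform bound S on [0, t]
  have hGc : ContinuousOn (fun u => |T u| + |I u| + |V u| + |C u|) (Icc (0:ℝ) t) :=
    (((hTc.mono hsub).abs.add (hIc.mono hsub).abs).add (hVc.mono hsub).abs).add
      (hCc.mono hsub).abs
  obtain ⟨S0, hS0⟩ := (isCompact_Icc : IsCompact (Icc (0:ℝ) t)).exists_bound_of_continuousOn hGc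
  set S : ℝ := max S0 1 with hSdef
  have hS1 : (1:ℝ) ≤ S := hSdef ▸ le_max_right _ _
  have hSpos : 0 < S := lt_of_lt_of_le one_pos hS1
  clear_value S
  have hbound : ∀ u ∈ Icc (0:ℝ) t, |T u| ≤ S ∧ |I u| ≤ S ∧ |V u| ≤ S ∧ |C u| ≤ S := by
    intro u hu
    have h1 := hS0 u hu
    have h2 : |T u| + |I u| + |V u| + |C u| ≤ S0 := by
      have := le_abs_self (|T u| + |I u| + |V u| + |C u|)
      calc |T u| + |I u| + |V u| + |C u| ≤ ‖|T u| + |I u| + |V u| + |C u|‖ := this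
        _ ≤ S0 := h1
    have hS0S : S0 ≤ S := hSdef ▸ le_max_left _ _
    constructor
    · have := abs_nonneg (I u); have := abs_nonneg (V u); have := abs_nonneg (C u); linarith
    constructor
    · have := abs_nonneg (T u); have := abs_nonneg (V u); have := abs_nonneg (C u); linarith
    constructor
    · have := abs_nonneg (T u); have := abs_nonneg (I u); have := abs_nonneg (C u); linarith
    · have := abs_nonneg (T u); have := abs_nonneg (I u); have := abs_nonneg (V u); linarith
  -- constants
  set K : ℝ := β * S + k * S + δ + μ + N * δ + c + q * S + σ + 1 with hKdef
  have hKpos : 0 < K := by rw [hKdef]; positivity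
  clear_value K
  set F : ℝ → ℝ := fun u => min (min (T u) (I u)) (min (V u) (C u)) with hFdef
  clear_value F
  have hFleT : ∀ u, F u ≤ T u := fun u =>
    hFdef ▸ le_trans (min_le_left _ _) (min_le_left _ _)
  have hFleI : ∀ u, F u ≤ I u := fun u =>
    hFdef ▸ le_trans (min_le_left _ _) (min_le_right _ _)
  have hFleV : ∀ u, F u ≤ V u := fun u =>
    hFdef ▸ le_trans (min_le_right _ _) (min_le_left _ _)
  have hFleC : ∀ u, F u ≤ C u := fun u =>
    hFdef ▸ le_trans (min_le_right _ _) (min_le_right _ _)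
  -- key barrier claim
  have key : ∀ ε : ℝ, 0 < ε → ε * Real.exp (K * t) ≤ S →
      ∀ u ∈ Icc (0:ℝ) t, -(ε * Real.exp (K * u)) < F u := by
    intro ε hε hεS
    by_contra hcon
    push_neg at hcon
    obtain ⟨u₀, hu₀, hu₀le⟩ := hcon
    set A : Set ℝ := Icc (0:ℝ) t ∩ {u | F u + ε * Real.exp (K * u) ≤ 0} with hAdef
    have hAne : A.Nonempty := ⟨u₀, hu₀, by simp only [mem_setOf_eq]; linarith⟩
    have hAclosed : IsClosed A := by
      have hcont : ContinuousOn (fun u => F u + ε * Real.exp (K * u)) (Icc (0:ℝ) t) := by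
        apply ContinuousOn.add
        · rw [hFdef]
          exact ((hTc.mono hsub).inf (hIc.mono hsub)).inf ((hVc.mono hsub).inf (hCc.mono hsub))
        · exact (continuous_const.mul (Real.continuous_exp.comp
            (continuous_const.mul continuous_id))).continuousOn
      have : A = Icc (0:ℝ) t ∩ (fun u => F u + ε * Real.exp (K * u)) ⁻¹' (Iic 0) := by
        ext u; simp [hAdef, mem_preimage]
      rw [this]
      exact hcont.preimage_isClosed_of_isClosed isClosed_Icc isClosed_Iic
    have hAbdd : BddBelow A := ⟨0, fun u hu => hu.1.1⟩
    set t0 : ℝ := sInf A with ht0def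
    have ht0A : t0 ∈ A := ht0def ▸ hAclosed.csInf_mem hAne hAbdd
    have ht0Icc : t0 ∈ Icc (0:ℝ) t := ht0A.1
    have ht0pos : 0 < t0 := by
      rcases lt_or_eq_of_le ht0Icc.1 with h | h
      · exact h
      · exfalso
        have h0 : F 0 + ε * Real.exp (K * 0) ≤ 0 := by
          have := ht0A.2; rw [← h] at this; exact this
        have hF0 : 0 ≤ F 0 := by
          simp only [hFdef]
          exact le_min (le_min hT0 hI0) (le_min hV0 hC0)
        have : Real.exp (K * 0) = 1 := by simp
        rw [this] at h0
        nlinarith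
    -- points before t0 are not in A
    have hbefore : ∀ u, 0 ≤ u → u < t0 → 0 < F u + ε * Real.exp (K * u) := by
      intro u hu hut0
      by_contra hle
      push_neg at hle
      have huA : u ∈ A := ⟨⟨hu, le_trans (le_of_lt hut0) ht0Icc.2⟩, hle⟩
      exact absurd (ht0def ▸ csInf_le hAbdd huA) (not_le.mpr hut0)
    have ht0mem : F t0 + ε * Real.exp (K * t0) ≤ 0 := ht0A.2
    clear ht0A
    clear_value t0
    clear_value A
    -- derivatives at t0 (interior point)
    have hIci : Ici (0:ℝ) ∈ 𝓝 t0 := Ici_mem_nhds ht0pos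
    have hT' : HasDerivAt T (lam - β * V t0 * T t0 - μ * T t0) t0 :=
      (hT t0 ht0Icc.1).hasDerivAt hIci
    have hI' : HasDerivAt I (β * V t0 * T t0 - k * I t0 * C t0 - δ * I t0) t0 :=
      (hI t0 ht0Icc.1).hasDerivAt hIci
    have hV' : HasDerivAt V (N * δ * I t0 - c * V t0) t0 :=
      (hV t0 ht0Icc.1).hasDerivAt hIci
    have hC' : HasDerivAt C (q * I t0 * C t0 - σ * C t0) t0 :=
      (hC t0 ht0Icc.1).hasDerivAt hIci
    -- F is continuous at t0, so F t0 + ε exp(K t0) = 0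
    have hFcont : ContinuousAt F t0 := by
      rw [hFdef]
      exact ((hT'.continuousAt.inf hI'.continuousAt).inf (hV'.continuousAt.inf hC'.continuousAt))
    have hecont : Continuous (fun u : ℝ => ε * Real.exp (K * u)) :=
      continuous_const.mul (Real.continuous_exp.comp (continuous_const.mul continuous_id))
    have hhcont : ContinuousAt (fun u => F u + ε * Real.exp (K * u)) t0 :=
      hFcont.add hecont.continuousAt
    have hFt0eq : F t0 + ε * Real.exp (K * t0) = 0 := by
      have hle : F t0 + ε * Real.exp (K * t0) ≤ 0 := ht0mem
      have hge : 0 ≤ F t0 + ε * Real.exp (K * t0) := by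
        have htend : Tendsto (fun u => F u + ε * Real.exp (K * u)) (𝓝[<] t0)
            (𝓝 (F t0 + ε * Real.exp (K * t0))) := hhcont.continuousWithinAt.tendsto
        refine ge_of_tendsto htend ?_
        filter_upwards [Ioo_mem_nhdsLT_of_mem (show t0 ∈ Ioc (0:ℝ) t0 from ⟨ht0pos, le_refl _⟩)]
          with u hu
        exact le_of_lt (hbefore u (le_of_lt hu.1) hu.2)
      linarith
    set E : ℝ := ε * Real.exp (K * t0) with hEdef
    have hEpos : 0 < E := by rw [hEdef]; positivity
    clear_value E
    have hFt0 : F t0 = -E := by rw [hEdef]; linarith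
    have hEleS : E ≤ S := by
      have h1 : Real.exp (K * t0) ≤ Real.exp (K * t) := by
        apply Real.exp_le_exp.mpr
        exact mul_le_mul_of_nonneg_left ht0Icc.2 (le_of_lt hKpos)
      calc E = ε * Real.exp (K * t0) := hEdef
        _ ≤ ε * Real.exp (K * t) := by nlinarith [Real.exp_pos (K * t0)]
        _ ≤ S := hεS
    -- bounds at t0
    obtain ⟨hTb, hIb, hVb, hCb⟩ := hbound t0 ht0Icc
    have hTlo : -E ≤ T t0 := hFt0 ▸ hFleT t0
    have hIlo : -E ≤ I t0 := hFt0 ▸ hFleI t0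
    have hVlo : -E ≤ V t0 := hFt0 ▸ hFleV t0
    have hClo : -E ≤ C t0 := hFt0 ▸ hFleC t0
    have hThi : T t0 ≤ S := le_trans (le_abs_self _) hTb
    have hIhi : I t0 ≤ S := le_trans (le_abs_self _) hIb
    have hVhi : V t0 ≤ S := le_trans (le_abs_self _) hVb
    have hChi : C t0 ≤ S := le_trans (le_abs_self _) hCb
    -- the common contradiction machine
    have contra : ∀ (X : ℝ → ℝ) (D : ℝ), HasDerivAt X D t0 → X t0 = -E →
        (∀ u, F u ≤ X u) → -(K * E) < D → False := by
      intro X D hXd hXt0 hFX hD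
      have hexp : HasDerivAt (fun u => ε * Real.exp (K * u)) (ε * (Real.exp (K * t0) * K)) t0 := by
        have h1 : HasDerivAt (fun u : ℝ => K * u) K t0 := by
          simpa using (hasDerivAt_id t0).const_mul K
        exact (h1.exp).const_mul ε
      have hg : HasDerivAt (fun u => X u + ε * Real.exp (K * u))
          (D + ε * (Real.exp (K * t0) * K)) t0 := hXd.add hexp
      have hnonpos : D + ε * (Real.exp (K * t0) * K) ≤ 0 := by
        refine left_min_deriv_nonpos ht0pos hg ?_
        intro u hu0 hut0
        have h1 : 0 < F u + ε * Real.exp (K * u) := hbefore u (le_of_lt hu0) hut0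
        have h2 : F u ≤ X u := hFX u
        have h3 : X t0 + ε * Real.exp (K * t0) = 0 := by rw [hXt0, hEdef]; ring
        have : 0 ≤ X u + ε * Real.exp (K * u) := by linarith
        linarith
      have hKE : ε * (Real.exp (K * t0) * K) = K * E := by rw [hEdef]; ring
      rw [hKE] at hnonpos
      linarith
    -- which component attains the minimum
    have hcases : T t0 = -E ∨ I t0 = -E ∨ V t0 = -E ∨ C t0 = -E := by
      have h1 := min_choice (min (T t0) (I t0)) (min (V t0) (C t0))
      have h2 := min_choice (T t0) (I t0)
      have h3 := min_choice (V t0) (C t0)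
      rw [hFdef] at hFt0
      rcases h1 with h1 | h1
      · rcases h2 with h2 | h2
        · left; rw [← h2, ← h1]; exact hFt0
        · right; left; rw [← h2, ← h1]; exact hFt0
      · rcases h3 with h3 | h3
        · right; right; left; rw [← h3, ← h1]; exact hFt0
        · right; right; right; rw [← h3, ← h1]; exact hFt0
    have hKge : β * S + k * S + N * δ + q * S + 1 ≤ K := by
      rw [hKdef]; linarith
    have hKE2 : (β * S + k * S + N * δ + q * S + 1) * E ≤ K * E :=
      mul_le_mul_of_nonneg_right hKge hEpos.le
    have hKE3 : β * S * E + k * S * E + N * δ * E + q * S * E + E ≤ K * E := by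
      have hr : β * S * E + k * S * E + N * δ * E + q * S * E + E
          = (β * S + k * S + N * δ + q * S + 1) * E := by ring
      linarith
    have hEE : E * E ≤ S * E := mul_le_mul_of_nonneg_right hEleS hEpos.le
    rcases hcases with hX | hX | hX | hX
    · -- T case
      refine contra T _ hT' hX hFleT ?_
      rw [hX]
      have h1 : -E * E ≤ V t0 * E := mul_le_mul_of_nonneg_right hVlo hEpos.le
      have h2 : β * (-(S * E)) ≤ β * (V t0 * E) := by
        apply mul_le_mul_of_nonneg_left _ hβ.le; linarith
      linarith [hKE3, mul_nonneg (mul_nonneg hk.le hSpos.le) hEpos.le,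
        mul_nonneg (mul_nonneg hN.le hδ.le) hEpos.le,
        mul_nonneg (mul_nonneg hq.le hSpos.le) hEpos.le,
        mul_nonneg hμ.le hEpos.le]
    · -- I case
      refine contra I _ hI' hX hFleI ?_
      rw [hX]
      have hVT : -(S * E) ≤ V t0 * T t0 :=
        box_prod_lower hEpos.le hSpos.le hVlo hVhi hTlo hThi
      have h1 : β * (-(S * E)) ≤ β * (V t0 * T t0) := mul_le_mul_of_nonneg_left hVT hβ.le
      have h2 : -E * E ≤ E * C t0 := by
        have := mul_le_mul_of_nonneg_left hClo hEpos.le; linarith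
      have h3 : k * (-(S * E)) ≤ k * (E * C t0) := by
        apply mul_le_mul_of_nonneg_left _ hk.le; linarith
      linarith [hKE3, mul_nonneg (mul_nonneg hN.le hδ.le) hEpos.le,
        mul_nonneg (mul_nonneg hq.le hSpos.le) hEpos.le,
        mul_nonneg hδ.le hEpos.le]
    · -- V case
      refine contra V _ hV' hX hFleV ?_
      rw [hX]
      have h1 : N * δ * (-E) ≤ N * δ * I t0 :=
        mul_le_mul_of_nonneg_left hIlo (by positivity)
      linarith [hKE3, mul_nonneg (mul_nonneg hβ.le hSpos.le) hEpos.le,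
        mul_nonneg (mul_nonneg hk.le hSpos.le) hEpos.le,
        mul_nonneg (mul_nonneg hq.le hSpos.le) hEpos.le,
        mul_nonneg hc.le hEpos.le]
    · -- C case
      refine contra C _ hC' hX hFleC ?_
      rw [hX]
      have h1 : I t0 * E ≤ S * E := mul_le_mul_of_nonneg_right hIhi hEpos.le
      have h2 : q * (I t0 * E) ≤ q * (S * E) := mul_le_mul_of_nonneg_left h1 hq.le
      linarith [hKE3, mul_nonneg (mul_nonneg hβ.le hSpos.le) hEpos.le,
        mul_nonneg (mul_nonneg hk.le hSpos.le) hEpos.le,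
        mul_nonneg (mul_nonneg hN.le hδ.le) hEpos.le,
        mul_nonneg hσ.le hEpos.le]
  -- conclude: F t ≥ 0 by letting ε → 0
  have hFt : 0 ≤ F t := by
    by_contra hneg
    push_neg at hneg
    set ε : ℝ := min (S * Real.exp (-(K * t))) (-F t * Real.exp (-(K * t)) / 2) with hεdef
    have hεpos : 0 < ε := by
      apply lt_min
      · positivity
      · have : 0 < -F t := by linarith
        positivity
    have hεS : ε * Real.exp (K * t) ≤ S := by
      have h1 : ε ≤ S * Real.exp (-(K * t)) := min_le_left _ _
      have h2 : Real.exp (-(K * t)) * Real.exp (K * t) = 1 := by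
        rw [← Real.exp_add]; simp
      nlinarith [Real.exp_pos (K * t)]
    have hkey := key ε hεpos hεS t ⟨ht, le_refl _⟩
    have h1 : ε ≤ -F t * Real.exp (-(K * t)) / 2 := min_le_right _ _
    have h2 : Real.exp (-(K * t)) * Real.exp (K * t) = 1 := by
      rw [← Real.exp_add]; simp
    nlinarith [Real.exp_pos (K * t)]
  exact ⟨le_trans hFt (hFleT t), le_trans hFt (hFleI t), le_trans hFt (hFleV t),
    le_trans hFt (hFleC t)⟩
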